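/- Given a regular finitely additive probability function P with values in a non-Archimedean ordered field extension of ℝ, the function C(B, A) = st(P(B ∩ A)/P(A)) for nonempty A satisfies: C(A, A) = 1, and for each nonempty A the map B ↦ C(B, A) is a finitely additive probability measure on subsets of Ω with values in [0,1] ⊆ ℝ. -/

import Mathlib

/-- For a regular finitely additive non-Archimedean probability function `P`,
the function `C(B, A) = st(P(B ∩ A)/P(A))` satisfies `C(A, A) = 1` and, for each
nonempty `A`, `B ↦ C(B, A)` is a finitely additive probability measure with
values in `[0,1] ⊆ ℝ`. -/
theorem stmt5 {Ω : Type*} {K : Type*} [Field K] [LinearOrder K] [IsStrictOrderedRing K]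
    (ι : ℝ →+* K) (hι : StrictMono ι)
    (P : Set Ω → K)
    (hadd : ∀ A B : Set Ω, Disjoint A B → P (A ∪ B) = P A + P B)
    (hnorm : P Set.univ = 1)
    (hreg : ∀ A : Set Ω, A.Nonempty → 0 < P A)
    (st : K → ℝ)
    (hst : ∀ x : K, (∃ n : ℕ, |x| ≤ ι n) →
      ∀ m : ℕ, 0 < m → |x - ι (st x)| < ι (1 / m))
    (C : Set Ω → Set Ω → ℝ)
    (hC : ∀ A B : Set Ω, B.Nonempty → C A B = st (P (A ∩ B) / P B)) :
    ∀ A : Set Ω, A.Nonempty →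
      (C A A = 1 ∧
       C Set.univ A = 1 ∧
       (∀ B : Set Ω, 0 ≤ C B A ∧ C B A ≤ 1) ∧
       (∀ B₁ B₂ : Set Ω, Disjoint B₁ B₂ → C (B₁ ∪ B₂) A = C B₁ A + C B₂ A)) := by
  -- basic facts about ι
  have hιle : ∀ {r s : ℝ}, r ≤ s → ι r ≤ ι s := fun h => hι.le_iff_le.mpr h
  have hιabs : ∀ r : ℝ, |ι r| = ι |r| := by
    intro r
    rcases le_or_gt 0 r with h | h
    · rw [abs_of_nonneg h, abs_of_nonneg]
      calc (0:K) = ι 0 := (map_zero ι).symm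
        _ ≤ ι r := hιle h
    · rw [abs_of_neg h, abs_of_neg, ← map_neg]
      calc ι r < ι 0 := hι h
        _ = 0 := map_zero ι
  -- uniqueness of reals infinitely close
  have huniq : ∀ r s : ℝ, (∀ m : ℕ, 0 < m → |ι r - ι s| < ι (3 / m)) → r = s := by
    intro r s h
    by_contra hne
    have h0 : 0 < |r - s| := abs_pos.mpr (sub_ne_zero.mpr hne)
    obtain ⟨m, hm⟩ := exists_nat_gt (3 / |r - s|)
    have hm0' : (0:ℝ) < m := lt_trans (by positivity) hm
    have hm0 : 0 < m := by exact_mod_cast hm0'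
    have hlt : 3 / (m:ℝ) < |r - s| := by
      rw [div_lt_iff₀ hm0']
      rw [div_lt_iff₀ h0] at hm
      linarith
    have hK := h m hm0
    rw [← map_sub, hιabs] at hK
    have := hι.lt_iff_lt.mp hK
    linarith
  -- P on the empty set and nonnegativity
  have hP0 : P ∅ = 0 := by
    have h := hadd ∅ ∅ disjoint_bot_left
    simp only [Set.union_self] at h
    linarith
  have hPnn : ∀ B : Set Ω, 0 ≤ P B := by
    intro B
    rcases B.eq_empty_or_nonempty with h | h
    · rw [h, hP0]
    · exact (hreg B h).le
  -- monotonicity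
  have hmono : ∀ A B : Set Ω, P (B ∩ A) ≤ P A := by
    intro A B
    have hd : Disjoint (B ∩ A) (A \ B) := by
      rw [Set.disjoint_left]
      rintro x ⟨hB, _⟩ ⟨_, hB'⟩
      exact hB' hB
    have hu : (B ∩ A) ∪ (A \ B) = A := by
      ext x
      simp only [Set.mem_union, Set.mem_inter_iff, Set.mem_diff]
      tauto
    have h := hadd _ _ hd
    rw [hu] at h
    have := hPnn (A \ B)
    linarith
  intro A hA
  have hPA : 0 < P A := hreg A hA
  -- ratio bounds
  have hratio : ∀ B : Set Ω, 0 ≤ P (B ∩ A) / P A ∧ P (B ∩ A) / P A ≤ 1 := by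
    intro B
    constructor
    · exact div_nonneg (hPnn _) hPA.le
    · rw [div_le_one hPA]
      exact hmono A B
  have hfin : ∀ B : Set Ω, ∃ n : ℕ, |P (B ∩ A) / P A| ≤ ι n := by
    intro B
    refine ⟨1, ?_⟩
    rw [abs_of_nonneg (hratio B).1]
    calc P (B ∩ A) / P A ≤ 1 := (hratio B).2
      _ = ι ((1:ℕ):ℝ) := by rw [Nat.cast_one, map_one]
    
  have hstB : ∀ B : Set Ω, ∀ m : ℕ, 0 < m →
      |P (B ∩ A) / P A - ι (st (P (B ∩ A) / P A))| < ι (1 / m) :=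
    fun B => hst _ (hfin B)
  -- st of 1 is 1
  have hst1 : st (1 : K) = 1 := by
    have hfin1 : ∃ n : ℕ, |(1:K)| ≤ ι n := ⟨1, by rw [abs_one, Nat.cast_one, map_one]⟩
    refine (huniq (st (1:K)) 1 ?_).symm ▸ rfl
    intro m hm
    have h := hst 1 hfin1 m hm
    calc |ι (st (1:K)) - ι 1| = |ι 1 - ι (st (1:K))| := abs_sub_comm _ _
      _ < ι (1/m) := by rw [map_one]; exact h
      _ ≤ ι (3/m) := hιle (by
          have : (0:ℝ) < m := by exact_mod_cast hm
          rw [div_le_div_iff₀ this this]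
          nlinarith)
  -- bounds on st of ratios
  have hbound : ∀ B : Set Ω, 0 ≤ st (P (B ∩ A) / P A) ∧ st (P (B ∩ A) / P A) ≤ 1 := by
    intro B
    set x := P (B ∩ A) / P A with hx
    set r := st x with hr
    constructor
    · by_contra h
      push_neg at h
      obtain ⟨m, hm⟩ := exists_nat_gt (1 / (-r))
      have hr0 : (0:ℝ) < -r := by linarith
      have hm0' : (0:ℝ) < m := lt_trans (by positivity) hm
      have hm0 : 0 < m := by exact_mod_cast hm0'
      have h1m : 1 / (m:ℝ) < -r := by
        rw [div_lt_iff₀ hm0']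
        rw [div_lt_iff₀ hr0] at hm
        linarith
      have habs := abs_lt.mp (hstB B m hm0)
      have hx0 : (0:K) ≤ x := (hratio B).1
      have : x < ι r + ι (1/m) := by linarith [habs.2]
      rw [← map_add] at this
      have hlt : ι (r + 1/m) < ι 0 := hι (by linarith)
      rw [map_zero] at hlt
      linarith
    · by_contra h
      push_neg at h
      obtain ⟨m, hm⟩ := exists_nat_gt (1 / (r - 1))
      have hr1 : (0:ℝ) < r - 1 := by linarith
      have hm0' : (0:ℝ) < m := lt_trans (by positivity) hm
      have hm0 : 0 < m := by exact_mod_cast hm0'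
      have h1m : 1 / (m:ℝ) < r - 1 := by
        rw [div_lt_iff₀ hm0']
        rw [div_lt_iff₀ hr1] at hm
        linarith
      have habs := abs_lt.mp (hstB B m hm0)
      have hx1 : x ≤ 1 := (hratio B).2
      have : ι r < x + ι (1/m) := by linarith [habs.1]
      have h2 : ι r < ι (1 + 1/m) := by
        rw [map_add, map_one]
        calc ι r < x + ι (1/m) := this
          _ ≤ 1 + ι (1/m) := by linarith
      have := hι.lt_iff_lt.mp h2
      linarith
  refine ⟨?_, ?_, ?_, ?_⟩
  · rw [hC A A hA, Set.inter_self, div_self hPA.ne']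
    exact hst1
  · rw [hC Set.univ A hA, Set.univ_inter, div_self hPA.ne']
    exact hst1
  · intro B
    rw [hC B A hA]
    exact hbound B
  · intro B₁ B₂ hd
    rw [hC _ A hA, hC _ A hA, hC _ A hA]
    have hdi : Disjoint (B₁ ∩ A) (B₂ ∩ A) :=
      hd.mono Set.inter_subset_left Set.inter_subset_left
    have hsplit : P ((B₁ ∪ B₂) ∩ A) = P (B₁ ∩ A) + P (B₂ ∩ A) := by
      rw [Set.union_inter_distrib_right]
      exact hadd _ _ hdi
    set x := P ((B₁ ∪ B₂) ∩ A) / P A with hx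
    set x₁ := P (B₁ ∩ A) / P A with hx1
    set x₂ := P (B₂ ∩ A) / P A with hx2
    have hxsum : x = x₁ + x₂ := by
      rw [hx, hx1, hx2, hsplit, add_div]
    apply huniq
    intro m hm
    have h0 := hstB (B₁ ∪ B₂) m hm
    have h1 := hstB B₁ m hm
    have h2 := hstB B₂ m hm
    rw [← hx, ← hx1, ← hx2] at *
    have key : ι (st x) - ι (st x₁ + st x₂) =
        (ι (st x) - x) + (x₁ - ι (st x₁)) + (x₂ - ι (st x₂)) := by
      rw [map_add, hxsum]; ring
    calc |ι (st x) - ι (st x₁ + st x₂)|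
        = |(ι (st x) - x) + (x₁ - ι (st x₁)) + (x₂ - ι (st x₂))| := by rw [key]
      _ ≤ |ι (st x) - x| + |x₁ - ι (st x₁)| + |x₂ - ι (st x₂)| :=
          le_trans (abs_add_le _ _) (by gcongr; exact abs_add_le _ _)
      _ = |x - ι (st x)| + |x₁ - ι (st x₁)| + |x₂ - ι (st x₂)| := by
          rw [abs_sub_comm (ι (st x)) x]
      _ < ι (1/m) + ι (1/m) + ι (1/m) := by
          have := h0; have := h1; have := h2
          linarith
      _ = ι (3/m) := by
          rw [← map_add, ← map_add]
          congr 1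
          ring
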